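/- arXiv:1903.04552 — 2 statements merged into one kernel-verified Lean document; each statement's English description precedes it below -/
import Mathlib

section
/- Fix integers K ≥ 2, d ≥ 1, a real η with 0 < η < 1, and set ρ = (1−η)/(K−1). For each class k' ∈ {1,…,K}, let X_{k',1},…,X_{k',d} be {1,…,K}-valued random variables with P(X_{k',i} = k') = η and P(X_{k',i} = j) = ρ for j ≠ k', all Kd variables being mutually independent, and let c_{k',j} = #{i : X_{k',i} = j}. For a bijection g of {1,…,K}, define the assignment score L_g = ∑_{k=1}^{K} c_{g(k),k}. Then the probability that the identity is the unique bijection maximizing L_g (i.e., L_g < L_{id} for every bijection g ≠ id) is at least Pl^K, where Pl = P(c_{1,1} > c_{1,j} for all j ≠ 1) is the per-class strict-majority probability. -/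
open Finset MeasureTheory ProbabilityTheory

def Cnd (K d : ℕ) (k : Fin K) (h : Fin d → Fin K) : Prop :=
  ∀ j, j ≠ k → (univ.filter fun i => h i = j).card < (univ.filter fun i => h i = k).card

def CndIf (K d : ℕ) (z k : Fin K) (h : Fin d → Fin K) : Prop :=
  k = z → Cnd K d z h

lemma prod_ite_all_eq {α M : Type*} [Fintype α] [CommMonoidWithZero M]
    (p : α → Prop) [DecidablePred p] [Decidable (∀ k, p k)] (g : α → M) :
    (∏ k, if p k then g k else (0 : M)) = if (∀ k, p k) then ∏ k, g k else 0 := by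
  by_cases h : ∀ k, p k
  · rw [if_pos h]
    exact Finset.prod_congr rfl fun k _ => if_pos (h k)
  · rw [if_neg h]
    push_neg at h
    obtain ⟨k, hk⟩ := h
    exact Finset.prod_eq_zero (Finset.mem_univ k) (if_neg hk)

lemma swap_count (K d : ℕ) (a b : Fin K) (h : Fin d → Fin K) (j : Fin K) :
    (univ.filter fun i => Equiv.swap a b (h i) = j).card
      = (univ.filter fun i => h i = Equiv.swap a b j).card := by
  congr 1
  apply Finset.filter_congr
  intro i _
  constructor
  · intro hi; rw [← hi, Equiv.swap_apply_self]
  · intro hi; rw [hi, Equiv.swap_apply_self]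

lemma cnd_swap (K d : ℕ) (a b : Fin K) (h : Fin d → Fin K) (hC : Cnd K d a h) :
    Cnd K d b fun i => Equiv.swap a b (h i) := by
  intro j hj
  rw [swap_count, swap_count, Equiv.swap_apply_right]
  apply hC
  intro hcontra
  apply hj
  have := congrArg (Equiv.swap a b) hcontra
  rwa [Equiv.swap_apply_self, Equiv.swap_apply_left] at this

/-- Paper's Theorem 1 (first part): the probability that the identity is the unique
bijection maximizing the assignment score `L_g = ∑ k, c (g k) k` is at least `Pl ^ K`,
where `Pl` is the per-class strict-majority probability. -/
theorem identity_unique_argmax_prob_ge_pow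
    (K d : ℕ) (hK : 2 ≤ K) (hd : 1 ≤ d)
    (η : ℝ) (hη0 : 0 < η) (hη1 : η < 1)
    (ρ : ℝ) (hρ : ρ = (1 - η) / ((K : ℝ) - 1))
    {Ω : Type} [MeasurableSpace Ω] (P : Measure Ω) [IsProbabilityMeasure P]
    (X : Fin K × Fin d → Ω → Fin K)
    (hmeas : ∀ p, Measurable (X p))
    (hindep : iIndepFun X P)
    (hdist : ∀ (k' : Fin K) (i : Fin d) (j : Fin K),
      P {ω | X (k', i) ω = j} = ENNReal.ofReal (if j = k' then η else ρ))
    (c : Fin K → Fin K → Ω → ℕ)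
    (hc : ∀ k' j ω, c k' j ω = (univ.filter (fun i => X (k', i) ω = j)).card)
    (L : Equiv.Perm (Fin K) → Ω → ℕ)
    (hL : ∀ g ω, L g ω = ∑ k, c (g k) k ω)
    (Pl : ENNReal)
    (hPl : Pl = P {ω | ∀ j, j ≠ (⟨0, by omega⟩ : Fin K) →
        c ⟨0, by omega⟩ j ω < c ⟨0, by omega⟩ ⟨0, by omega⟩ ω}) :
    P {ω | ∀ g : Equiv.Perm (Fin K), g ≠ 1 → L g ω < L 1 ω} ≥ Pl ^ K := by
  classical
  set z : Fin K := ⟨0, by omega⟩ with hz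
  letI : ∀ k : Fin K, DecidablePred (Cnd K d k) := fun k h => Classical.propDecidable _
  letI : ∀ k : Fin K, DecidablePred (CndIf K d z k) := fun k h => Classical.propDecidable _
  set pm : Fin K → Fin K → ENNReal := fun k j => ENNReal.ofReal (if j = k then η else ρ)
    with hpm
  -- the marginal distributions
  have hmarg : ∀ (k : Fin K) (i : Fin d) (j : Fin K), P (X (k, i) ⁻¹' {j}) = pm k j := by
    intro k i j
    have h1 : X (k, i) ⁻¹' {j} = {ω | X (k, i) ω = j} := rfl
    rw [h1, hdist k i j]
  -- probability of an atom
  have hatom : ∀ f : Fin K × Fin d → Fin K,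
      P {ω | ∀ p, X p ω = f p} = ∏ p, pm p.1 (f p) := by
    intro f
    have h1 : {ω | ∀ p, X p ω = f p} = ⋂ p ∈ Finset.univ, X p ⁻¹' {f p} := by
      ext ω
      simp [Set.mem_iInter]
    rw [h1, hindep.measure_inter_preimage_eq_mul Finset.univ
      (fun p _ => measurableSet_singleton (f p))]
    exact Finset.prod_congr rfl fun p _ => hmarg p.1 p.2 (f p)
  -- probability of any event determined by the X's
  have key : ∀ Q : (Fin K × Fin d → Fin K) → Prop,
      P {ω | Q (fun p => X p ω)} = ∑ f ∈ Finset.univ.filter Q, ∏ p, pm p.1 (f p) := by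
    intro Q
    have hset : {ω | Q (fun p => X p ω)} =
        ⋃ f ∈ Finset.univ.filter Q, {ω | ∀ p, X p ω = f p} := by
      ext ω
      simp only [Set.mem_setOf_eq, Set.mem_iUnion, Finset.mem_filter, Finset.mem_univ, true_and]
      constructor
      · intro h
        exact ⟨fun p => X p ω, h, fun p => rfl⟩
      · rintro ⟨f, hQ, hf⟩
        have hfe : (fun p => X p ω) = f := funext hf
        rwa [hfe]
    have hdisj : (↑(Finset.univ.filter Q) : Set (Fin K × Fin d → Fin K)).PairwiseDisjoint
        (fun f => {ω | ∀ p, X p ω = f p}) := by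
      intro f _ g _ hfg
      rw [Function.onFun, Set.disjoint_left]
      intro ω hωf hωg
      exact hfg (funext fun p => (hωf p).symm.trans (hωg p))
    have hm : ∀ f ∈ Finset.univ.filter Q, MeasurableSet {ω | ∀ p, X p ω = f p} := by
      intro f _
      have h2 : {ω | ∀ p, X p ω = f p} = ⋂ p, X p ⁻¹' {f p} := by
        ext ω; simp [Set.mem_iInter]
      rw [h2]
      exact MeasurableSet.iInter fun p => (hmeas p) (measurableSet_singleton (f p))
    rw [hset, measure_biUnion_finset hdisj hm]
    exact Finset.sum_congr rfl fun f _ => hatom f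
  -- factorization of a class-wise event
  have factor : ∀ Cs : Fin K → (Fin d → Fin K) → Prop,
      (∑ f ∈ @Finset.filter _ (fun f : Fin K × Fin d → Fin K =>
          ∀ k, Cs k (fun i => f (k, i))) (fun _ => Classical.propDecidable _) Finset.univ,
          ∏ p, pm p.1 (f p))
      = ∏ k, ∑ h ∈ @Finset.filter _ (Cs k) (fun _ => Classical.propDecidable _) Finset.univ,
          ∏ i, pm k (h i) := by
    intro Cs
    simp only [Finset.sum_filter]
    rw [Fintype.prod_sum (f := fun (k : Fin K) (h : Fin d → Fin K) =>
      if Cs k h then ∏ i, pm k (h i) else 0)]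
    refine Fintype.sum_equiv (Equiv.curry _ _ _) _ _ fun f => ?_
    show _ = ∏ k, if Cs k fun i => f (k, i) then ∏ i, pm k (f (k, i)) else 0
    rw [@prod_ite_all_eq (Fin K) ENNReal _ _ (fun k => Cs k fun i => f (k, i))
      (fun _ => Classical.propDecidable _) (Classical.propDecidable _)
      (fun k => ∏ i, pm k (f (k, i)))]
    exact @if_congr _ _ _ (Classical.propDecidable _) (Classical.propDecidable _) _ _ _ _
      Iff.rfl (Fintype.prod_prod_type _) rfl
  -- the per-class sums are all equal to the one for class z
  have hswap : ∀ k : Fin K,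
      (∑ h ∈ Finset.univ.filter (Cnd K d k), ∏ i, pm k (h i))
      = ∑ h ∈ Finset.univ.filter (Cnd K d z), ∏ i, pm z (h i) := by
    intro k
    refine Finset.sum_nbij' (fun h => fun i => Equiv.swap k z (h i))
      (fun h => fun i => Equiv.swap k z (h i)) ?_ ?_ ?_ ?_ ?_
    · intro h hh
      rw [Finset.mem_filter] at hh ⊢
      exact ⟨Finset.mem_univ _, cnd_swap K d k z h hh.2⟩
    · intro h hh
      rw [Finset.mem_filter] at hh ⊢
      refine ⟨Finset.mem_univ _, ?_⟩
      have := cnd_swap K d z k h hh.2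
      rwa [Equiv.swap_comm] at this
    · intro h _
      funext i
      exact Equiv.swap_apply_self _ _ _
    · intro h _
      funext i
      exact Equiv.swap_apply_self _ _ _
    · intro h _
      refine Finset.prod_congr rfl fun i _ => ?_
      show pm k (h i) = pm z (Equiv.swap k z (h i))
      have hiff : Equiv.swap k z (h i) = z ↔ h i = k := by
        constructor
        · intro hx
          have := congrArg (Equiv.swap k z) hx
          rwa [Equiv.swap_apply_self, Equiv.swap_apply_right] at this
        · intro hx; rw [hx, Equiv.swap_apply_left]
      rw [hpm]
      exact congrArg ENNReal.ofReal (if_congr hiff.symm rfl rfl)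
  -- normalization: the unconditioned per-class sum is 1
  have hone : ∀ k : Fin K, ∑ j, pm k j = 1 := by
    intro k
    have i0 : Fin d := ⟨0, by omega⟩
    have hu : (Set.univ : Set Ω) = ⋃ j : Fin K, X (k, i0) ⁻¹' {j} := by
      ext ω; simp
    have hdisj : Pairwise (Function.onFun Disjoint (fun j : Fin K => X (k, i0) ⁻¹' {j})) := by
      intro a b hab
      rw [Function.onFun, Set.disjoint_left]
      intro ω ha hb
      exact hab ((Set.mem_preimage.1 ha).symm.trans (Set.mem_preimage.1 hb))
    have := measure_iUnion (μ := P) hdisj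
      (fun j => (hmeas (k, i0)) (measurableSet_singleton j))
    rw [← hu, measure_univ, tsum_fintype] at this
    rw [← this.symm]
    exact Finset.sum_congr rfl fun j _ => (hmarg k i0 j).symm
  have hnorm : ∀ k : Fin K, (∑ h : Fin d → Fin K, ∏ i, pm k (h i)) = 1 := by
    intro k
    rw [← Fintype.prod_sum (f := fun (_ : Fin d) (j : Fin K) => pm k j)]
    rw [Finset.prod_congr rfl fun i _ => hone k]
    exact Finset.prod_const_one
  -- Pl equals the class-z sum
  have hPlS : Pl = ∑ h ∈ Finset.univ.filter (Cnd K d z), ∏ i, pm z (h i) := by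
    have hQ : {ω | ∀ j, j ≠ z → c z j ω < c z z ω}
        = {ω | ∀ k, CndIf K d z k fun i => X (k, i) ω} := by
      ext ω
      simp only [Set.mem_setOf_eq]
      constructor
      · intro hω k hk j hj
        subst hk
        have := hω j hj
        rwa [hc, hc] at this
      · intro hω j hj
        rw [hc, hc]
        exact hω z rfl j hj
    rw [hPl]
    refine (congrArg P hQ).trans
      (((key (fun f => ∀ k, CndIf K d z k fun i => f (k, i))).trans
        ((factor (CndIf K d z)).trans ?_)))
    refine (Finset.prod_eq_single z (fun b _ hbz => ?_)
      (fun hzz => absurd (Finset.mem_univ z) hzz)).trans ?_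
    · rw [Finset.filter_true_of_mem
        (fun h _ => show CndIf K d z b h from fun hb => absurd hb hbz)]
      exact hnorm b
    · congr 1
      apply Finset.filter_congr
      intro h _
      exact ⟨fun hh => hh rfl, fun hh _ => hh⟩
  -- probability of the all-classes-correct event
  have hmainP : P {ω | ∀ k, Cnd K d k fun i => X (k, i) ω} = Pl ^ K := by
    refine (key (fun f => ∀ k, Cnd K d k fun i => f (k, i))).trans
      ((factor (Cnd K d)).trans ?_)
    refine (Finset.prod_congr rfl fun k _ => hswap k).trans ?_
    rw [Finset.prod_const, Finset.card_univ, Fintype.card_fin, ← hPlS]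
  -- the all-classes-correct event implies that the identity is the unique argmax
  have hsub : {ω | ∀ k, Cnd K d k fun i => X (k, i) ω} ⊆
      {ω | ∀ g : Equiv.Perm (Fin K), g ≠ 1 → L g ω < L 1 ω} := by
    intro ω hω
    simp only [Set.mem_setOf_eq] at hω ⊢
    intro g hg
    rw [hL, hL]
    have h1 : (∑ k, c ((1 : Equiv.Perm (Fin K)) k) k ω) = ∑ k, c (g k) (g k) ω := by
      simp only [Equiv.Perm.one_apply]
      exact (Equiv.sum_comp g (fun k => c k k ω)).symm
    rw [h1]
    have hex : ∃ k, g k ≠ k := by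
      by_contra hcon
      push_neg at hcon
      exact hg (Equiv.ext hcon)
    obtain ⟨k0, hk0⟩ := hex
    apply Finset.sum_lt_sum
    · intro k _
      by_cases hk : g k = k
      · rw [hk]
      · rw [hc, hc]
        exact le_of_lt (hω (g k) k (Ne.symm hk))
    · refine ⟨k0, Finset.mem_univ k0, ?_⟩
      rw [hc, hc]
      exact hω (g k0) k0 (Ne.symm hk0)
  exact le_trans (le_of_eq hmainP.symm) (measure_mono hsub)
end

section
/- Fix integers K ≥ 2, d ≥ 1, a real η with 0 ≤ η ≤ 1, set ρ = (1−η)/(K−1), and fix k ∈ {1,…,K}. Let X_1,…,X_d be independent {1,…,K}-valued random variables with P(X_i = k) = η and P(X_i = j) = ρ for j ≠ k, and let c_j = #{i : X_i = j}. Then P(c_k > c_j for all j ≠ k) = d! · ∑_{a=0}^{d} (η^a / a!) · T(K−1, d−a, a), where T(m, D, a) = ∑ ∏_{l=1}^{m} ρ^{e_l} / e_l!, the sum ranging over all (e_1,…,e_m) ∈ ℕ^m with ∑_l e_l = D and e_l < a for every l. -/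
open Finset MeasureTheory ProbabilityTheory

/-- fiber count of a tuple -/
def cnt {d K : ℕ} (f : Fin d → Fin K) : Fin K → ℕ :=
  fun j => (univ.filter (fun i => f i = j)).card

lemma cnt_cons {d K : ℕ} (x : Fin K) (f : Fin d → Fin K) (j : Fin K) :
    cnt (Fin.cons x f) j = (if x = j then 1 else 0) + cnt f j := by
  unfold cnt
  rw [Finset.card_filter, Finset.card_filter, Fin.sum_univ_succ]
  simp

lemma cnt_sum {d K : ℕ} (f : Fin d → Fin K) : ∑ j, cnt f j = d := by
  unfold cnt
  rw [← Finset.card_eq_sum_card_fiberwise (t := univ) (fun x _ => mem_univ _)]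
  simp

lemma cnt_cons_eq_iff {d K : ℕ} (x : Fin K) (f : Fin d → Fin K) (e : Fin K → ℕ) :
    cnt (Fin.cons x f) = e ↔ 0 < e x ∧ cnt f = Function.update e x (e x - 1) := by
  constructor
  · rintro rfl
    refine ⟨by simp [cnt_cons], ?_⟩
    funext j
    rcases eq_or_ne j x with rfl | hj
    · simp [cnt_cons]
    · simp [Function.update_of_ne hj, cnt_cons, Ne.symm hj]
  · rintro ⟨hx, he⟩
    funext j
    rcases eq_or_ne j x with rfl | hj
    · have := congrFun he j
      simp at this
      rw [cnt_cons, this]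
      simp
      omega
    · have := congrFun he j
      rw [Function.update_of_ne hj] at this
      rw [cnt_cons, this]
      simp [Ne.symm hj]

lemma prod_factorial_update (K : ℕ) (x : Fin K) (e : Fin K → ℕ) (hx : 0 < e x) :
    (∏ j, (e j).factorial)
      = e x * ∏ j, (Function.update e x (e x - 1) j).factorial := by
  have hc : (fun j => (Function.update e x (e x - 1) j).factorial)
      = Function.update (fun j => (e j).factorial) x ((e x - 1).factorial) := by
    funext j
    rcases eq_or_ne j x with rfl | hj
    · simp
    · simp [Function.update_of_ne hj]
  calc (∏ j, (e j).factorial)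
      = ∏ j, Function.update (fun j => (e j).factorial) x ((e x - 1).factorial) j
          * (if j = x then e x else 1) := by
        apply Finset.prod_congr rfl
        intro j _
        rcases eq_or_ne j x with rfl | hj
        · rw [Function.update_self, if_pos rfl]
          conv_lhs => rw [show e j = (e j - 1) + 1 by omega]
          rw [Nat.factorial_succ]
          have : e j - 1 + 1 = e j := by omega
          rw [this]
          ring
        · simp [Function.update_of_ne hj, hj]
    _ = e x * ∏ j, (Function.update e x (e x - 1) j).factorial := by
        rw [Finset.prod_mul_distrib, hc]
        simp [mul_comm]

/-- The number of tuples with prescribed fiber counts is the multinomial coefficient. -/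
lemma key_count (K : ℕ) : ∀ (d : ℕ) (e : Fin K → ℕ), (∑ j, e j) = d →
    (∏ j, (e j).factorial) *
      ((univ.filter (fun f : Fin d → Fin K => cnt f = e)).card) = d.factorial := by
  intro d
  induction d with
  | zero =>
    intro e he
    have he0 : e = fun _ => 0 := by
      funext j
      exact Finset.sum_eq_zero_iff.mp he j (mem_univ j)
    subst he0
    have : (univ.filter (fun f : Fin 0 → Fin K => cnt f = fun _ => 0)) = univ := by
      apply Finset.filter_true_of_mem
      intro f _
      funext j
      simp [cnt]
    rw [this]
    simp
  | succ d ih =>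
    intro e he
    have hcard : (univ.filter (fun f : Fin (d+1) → Fin K => cnt f = e)).card
        = ∑ x : Fin K,
            (univ.filter (fun f : Fin d → Fin K => cnt (Fin.cons x f) = e)).card := by
      rw [Finset.card_filter]
      rw [← Fintype.sum_equiv (Fin.consEquiv (fun _ : Fin (d+1) => Fin K))
        (fun q => if cnt (Fin.consEquiv (fun _ : Fin (d+1) => Fin K) q) = e then 1 else 0)
        (fun f => if cnt f = e then 1 else 0) (fun q => rfl)]
      rw [Fintype.sum_prod_type]
      exact Finset.sum_congr rfl fun x _ => by rw [Finset.card_filter]; rfl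
    rw [hcard, Finset.mul_sum]
    have hterm : ∀ x : Fin K,
        (∏ j, (e j).factorial) *
          (univ.filter (fun f : Fin d → Fin K => cnt (Fin.cons x f) = e)).card
        = e x * d.factorial := by
      intro x
      rcases Nat.eq_zero_or_pos (e x) with hx | hx
      · have : (univ.filter (fun f : Fin d → Fin K => cnt (Fin.cons x f) = e)) = ∅ := by
          apply Finset.filter_false_of_mem
          intro f _
          rw [cnt_cons_eq_iff]
          omega
        rw [this]
        simp [hx]
      · have hfilter : (univ.filter (fun f : Fin d → Fin K => cnt (Fin.cons x f) = e))
            = (univ.filter (fun f : Fin d → Fin K =>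
                cnt f = Function.update e x (e x - 1))) := by
          apply Finset.filter_congr
          intro f _
          simp only [cnt_cons_eq_iff]
          simp [hx]
        rw [hfilter]
        have hsum : ∑ j, Function.update e x (e x - 1) j = d := by
          rw [Finset.sum_update_of_mem (mem_univ x)]
          have h2 := Finset.sum_eq_sum_sdiff_singleton_add (mem_univ x) e
          omega
        rw [prod_factorial_update K x e hx, mul_assoc, ih _ hsum]
    rw [Finset.sum_congr rfl fun x _ => hterm x, ← Finset.sum_mul, he,
      Nat.factorial_succ]

/-- `T ρ a m D = ∑ ∏_{l} ρ ^ e l / (e l)!`, the sum ranging over all tuples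
`e : Fin m → ℕ` with `∑ l, e l = D` and `e l < a` for every `l`. -/
noncomputable def T (ρ : ℝ) (a : ℕ) (m D : ℕ) : ℝ :=
  ∑ e ∈ (Finset.Nat.antidiagonalTuple m D).filter (fun e => ∀ l, e l < a),
    ∏ l, ρ ^ e l / ((e l).factorial : ℝ)

/-- The purely combinatorial identity behind the theorem. -/
lemma real_id (m d : ℕ) (η ρ : ℝ) (k : Fin (m + 1)) :
    ∑ f ∈ univ.filter (fun f : Fin d → Fin (m+1) => ∀ j, j ≠ k → cnt f j < cnt f k),
        ∏ i, (if f i = k then η else ρ)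
    = (d.factorial : ℝ) * ∑ a ∈ Finset.range (d + 1),
        η ^ a / (a.factorial : ℝ) * T ρ a m (d - a) := by
  set p : Fin (m+1) → ℝ := fun j => if j = k then η else ρ with hp
  set F := univ.filter (fun f : Fin d → Fin (m+1) => ∀ j, j ≠ k → cnt f j < cnt f k) with hF
  set E := (Finset.Nat.antidiagonalTuple (m+1) d).filter
      (fun e : Fin (m+1) → ℕ => ∀ j, j ≠ k → e j < e k) with hE
  have B1 : ∀ f : Fin d → Fin (m+1),
      (∏ i, (if f i = k then η else ρ)) = ∏ j, p j ^ cnt f j := by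
    intro f
    rw [← Finset.prod_fiberwise univ f (fun i => if f i = k then η else ρ)]
    refine Finset.prod_congr rfl fun j _ => ?_
    rw [Finset.prod_congr rfl (fun i hi => ?_), Finset.prod_const]
    · rfl
    · rw [mem_filter] at hi
      rw [hi.2]
  have hmaps : ∀ f ∈ F, cnt f ∈ E := by
    intro f hf
    rw [hF, mem_filter] at hf
    rw [hE, mem_filter, Finset.Nat.mem_antidiagonalTuple]
    exact ⟨cnt_sum f, hf.2⟩
  calc ∑ f ∈ F, ∏ i, (if f i = k then η else ρ)
      = ∑ f ∈ F, ∏ j, p j ^ cnt f j := Finset.sum_congr rfl fun f _ => B1 f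
    _ = ∑ e ∈ E, ∑ f ∈ F.filter (fun f => cnt f = e), ∏ j, p j ^ cnt f j :=
        (Finset.sum_fiberwise_of_maps_to hmaps _).symm
    _ = ∑ e ∈ E, (d.factorial : ℝ) * ∏ j, p j ^ e j / ((e j).factorial : ℝ) := by
        refine Finset.sum_congr rfl fun e he => ?_
        rw [hE, mem_filter, Finset.Nat.mem_antidiagonalTuple] at he
        have hfe : F.filter (fun f => cnt f = e)
            = univ.filter (fun f : Fin d → Fin (m+1) => cnt f = e) := by
          rw [hF, Finset.filter_filter]
          exact Finset.filter_congr fun f _ =>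
            ⟨fun h => h.2, fun h => ⟨by rw [h]; exact he.2, h⟩⟩
        rw [hfe, Finset.sum_congr rfl (fun f hf =>
            show (∏ j, p j ^ cnt f j) = ∏ j, p j ^ e j by
              rw [(mem_filter.mp hf).2]),
          Finset.sum_const, nsmul_eq_mul]
        have hkc := key_count (m+1) d e he.1
        have hcast : ((∏ j, (e j).factorial : ℕ) : ℝ) *
            (((univ.filter (fun f : Fin d → Fin (m+1) => cnt f = e)).card : ℕ) : ℝ)
            = (d.factorial : ℝ) := by
          rw [← Nat.cast_mul, hkc]
        push_cast at hcast
        have hne : (∏ j, ((e j).factorial : ℝ)) ≠ 0 := by positivity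
        rw [Finset.prod_div_distrib]
        rw [← hcast]
        field_simp
    _ = (d.factorial : ℝ) * ∑ a ∈ Finset.range (d + 1),
        η ^ a / (a.factorial : ℝ) * T ρ a m (d - a) := by
        unfold T
        simp only [Finset.mul_sum]
        rw [Finset.sum_sigma']
        refine Finset.sum_nbij' (fun e => ⟨e k, fun l => e (k.succAbove l)⟩)
          (fun x => k.insertNth x.1 x.2) ?_ ?_ ?_ ?_ ?_
        · intro e he
          rw [hE, mem_filter, Finset.Nat.mem_antidiagonalTuple] at he
          have hsum := Fin.sum_univ_succAbove e k
          have hle : e k ≤ d := by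
            rw [← he.1]
            exact Finset.single_le_sum (fun j _ => Nat.zero_le _) (mem_univ k)
          rw [Finset.mem_sigma, Finset.mem_range, mem_filter,
            Finset.Nat.mem_antidiagonalTuple]
          dsimp only
          refine ⟨by omega, by omega, fun l => he.2 _ (Fin.succAbove_ne k l)⟩
        · rintro ⟨a, e'⟩ hx
          rw [Finset.mem_sigma, Finset.mem_range, mem_filter,
            Finset.Nat.mem_antidiagonalTuple] at hx
          dsimp only at hx
          rw [hE, mem_filter, Finset.Nat.mem_antidiagonalTuple]
          dsimp only
          have hsum := Fin.sum_univ_succAbove (k.insertNth a e') k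
          simp only [Fin.insertNth_apply_same, Fin.insertNth_apply_succAbove] at hsum
          constructor
          · rw [hsum]
            have := hx.2.1
            omega
          · intro j hj
            obtain ⟨l, rfl⟩ := Fin.exists_succAbove_eq hj
            rw [Fin.insertNth_apply_same, Fin.insertNth_apply_succAbove]
            exact hx.2.2 l
        · intro e _
          exact Fin.insertNth_self_removeNth k e
        · rintro ⟨a, e'⟩ _
          dsimp only
          exact Sigma.ext (Fin.insertNth_apply_same (α := fun _ => ℕ) k a e')
            (heq_of_eq (Fin.insertNth_comp_succAbove k a e'))
        · intro e _
          rw [Fin.prod_univ_succAbove (fun j => p j ^ e j / ((e j).factorial : ℝ)) k]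
          simp [hp, Fin.succAbove_ne k]

/-- The strict-majority probability equals `d! · ∑_{a=0}^{d} (η^a / a!) · T(K-1, d-a, a)`,
grouping the constrained multinomial sum by the value `a` of the correct-cluster count. -/
theorem strict_majority_probability_eq_dp_sum
    (K d : ℕ) (hK : 2 ≤ K) (hd : 1 ≤ d)
    (η : ℝ) (hη0 : 0 ≤ η) (hη1 : η ≤ 1)
    (ρ : ℝ) (hρ : ρ = (1 - η) / ((K : ℝ) - 1))
    (k : Fin K)
    {Ω : Type} [MeasurableSpace Ω] (P : Measure Ω) [IsProbabilityMeasure P]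
    (X : Fin d → Ω → Fin K)
    (hmeas : ∀ i, Measurable (X i))
    (hindep : iIndepFun X P)
    (hdist : ∀ (i : Fin d) (j : Fin K),
      P {ω | X i ω = j} = ENNReal.ofReal (if j = k then η else ρ))
    (c : Fin K → Ω → ℕ)
    (hc : ∀ j ω, c j ω = (univ.filter (fun i => X i ω = j)).card) :
    P {ω | ∀ j, j ≠ k → c j ω < c k ω}
      = ENNReal.ofReal ((d.factorial : ℝ)
          * ∑ a ∈ Finset.range (d + 1),
              η ^ a / (a.factorial : ℝ) * T ρ a (K - 1) (d - a)) := by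
  have hρ0 : 0 ≤ ρ := by
    rw [hρ]
    apply div_nonneg (by linarith)
    have : (2 : ℝ) ≤ (K : ℝ) := by exact_mod_cast hK
    linarith
  have hp : ∀ j : Fin K, 0 ≤ (if j = k then η else ρ) := by
    intro j; split <;> assumption
  obtain ⟨m, rfl⟩ : ∃ m, K = m + 1 := ⟨K - 1, by omega⟩
  -- Step A: reduce the probability to a real sum over tuples
  have hA : P {ω | ∀ j, j ≠ k → c j ω < c k ω}
      = ENNReal.ofReal (∑ f ∈ univ.filter
            (fun f : Fin d → Fin (m+1) => ∀ j, j ≠ k → cnt f j < cnt f k),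
          ∏ i, (if f i = k then η else ρ)) := by
    set F := univ.filter
      (fun f : Fin d → Fin (m+1) => ∀ j, j ≠ k → cnt f j < cnt f k) with hF
    have hset : {ω | ∀ j, j ≠ k → c j ω < c k ω}
        = ⋃ f ∈ F, {ω | (fun i => X i ω) = f} := by
      ext ω
      simp only [Set.mem_setOf_eq, Set.mem_iUnion, hF, mem_filter, mem_univ, true_and,
        exists_prop]
      constructor
      · intro h
        refine ⟨fun i => X i ω, fun j hj => ?_, rfl⟩
        have := h j hj
        rw [hc j ω, hc k ω] at this
        exact this
      · rintro ⟨f, hcond, hfe⟩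
        intro j hj
        have h2 : cnt (fun i => X i ω) j < cnt (fun i => X i ω) k := by
          rw [hfe]
          exact hcond j hj
        rw [hc j ω, hc k ω]
        exact h2
    have hsing : ∀ f : Fin d → Fin (m+1),
        {ω | (fun i => X i ω) = f} = ⋂ i, X i ⁻¹' {f i} := by
      intro f
      ext ω
      simp [funext_iff]
    rw [hset, measure_biUnion_finset ?hdisj ?hmeas']
    case hdisj =>
      intro f _ g hg hfg
      rw [Function.onFun]
      rw [Set.disjoint_left]
      rintro ω hωf hωg
      exact hfg (hωf.symm.trans hωg)
    case hmeas' =>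
      intro f _
      rw [hsing]
      exact MeasurableSet.iInter fun i => hmeas i (measurableSet_singleton (f i))
    rw [ENNReal.ofReal_sum_of_nonneg (fun f _ => Finset.prod_nonneg fun i _ => hp _)]
    refine Finset.sum_congr rfl fun f _ => ?_
    rw [hsing]
    have hinter : (⋂ i, X i ⁻¹' {f i}) = ⋂ i ∈ Finset.univ, X i ⁻¹' {f i} := by simp
    rw [hinter, (iIndepFun_iff_measure_inter_preimage_eq_mul.mp hindep) Finset.univ
      (sets := fun i => {f i}) (fun i _ => measurableSet_singleton (f i))]
    rw [Finset.prod_congr rfl (fun i _ =>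
      show P (X i ⁻¹' {f i}) = ENNReal.ofReal (if f i = k then η else ρ) from hdist i (f i))]
    exact (ENNReal.ofReal_prod_of_nonneg (fun i _ => hp (f i))).symm
  rw [hA, real_id m d η ρ k]
  norm_num
end
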